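/- arXiv:2011.05631 — 5 statements merged into one kernel-verified Lean document; each statement's English description precedes it below -/
import Mathlib

section
/- Under the Bakhvalov-type mesh xᵢ = -(τ/(pμ₀))·ln(1 - ξ·i/N) with ξ = 4(1 - μ₀⁻¹), N ≥ 16, μ₀⁻¹ ≤ N⁻¹, τ ≥ 1, 0 < p < 1, the mesh size h_{N/4−2} = x_{N/4−1} − x_{N/4−2} satisfies (τ/(4p))·μ₀⁻¹ ≤ h_{N/4−2} ≤ (τ/p)·μ₀⁻¹. -/
set_option maxHeartbeats 800000 in
theorem stmt_8 (N : ℕ) (hN : 16 ≤ N) (hdvd : 4 ∣ N)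
    (μ₀ τ p : ℝ) (hμ₀ : 0 < μ₀) (hμ : μ₀⁻¹ ≤ (N : ℝ)⁻¹) (hτ : 1 ≤ τ)
    (hp : 0 < p) (hp1 : p < 1)
    (x : ℕ → ℝ)
    (hx : ∀ i : ℕ, i ≤ N / 4 →
      x i = -(τ / (p * μ₀)) * Real.log (1 - 4 * (1 - μ₀⁻¹) * (i : ℝ) / (N : ℝ))) :
    τ / (4 * p) * μ₀⁻¹ ≤ x (N / 4 - 1) - x (N / 4 - 2) ∧
    x (N / 4 - 1) - x (N / 4 - 2) ≤ τ / p * μ₀⁻¹ := by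
  obtain ⟨M, rfl⟩ := hdvd
  have hM : 4 ≤ M := by omega
  have hdiv : 4 * M / 4 = M := by omega
  rw [hdiv] at hx ⊢
  have hMR : (4:ℝ) ≤ (M:ℝ) := by exact_mod_cast hM
  have hMpos : (0:ℝ) < (M:ℝ) := by linarith
  set u : ℝ := μ₀⁻¹ with hu_def
  have hu : 0 < u := inv_pos.mpr hμ₀
  have hcast : ((4 * M : ℕ) : ℝ) = 4 * (M:ℝ) := by push_cast; ring
  have huM : u * (4 * (M:ℝ)) ≤ 1 := by
    rw [hcast] at hμ
    have h4M : (0:ℝ) < 4 * (M:ℝ) := by linarith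
    calc u * (4*(M:ℝ)) ≤ (4*(M:ℝ))⁻¹ * (4*(M:ℝ)) :=
          mul_le_mul_of_nonneg_right hμ h4M.le
      _ = 1 := inv_mul_cancel₀ h4M.ne'
  have h1 := hx (M - 1) (by omega)
  have h2 := hx (M - 2) (by omega)
  have hc1 : ((M - 1 : ℕ) : ℝ) = (M:ℝ) - 1 := by
    have h : (1:ℕ) ≤ M := by omega
    push_cast [h]; ring
  have hc2 : ((M - 2 : ℕ) : ℝ) = (M:ℝ) - 2 := by
    have h : (2:ℕ) ≤ M := by omega
    push_cast [h]; ring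
  set P : ℝ := 2 + ((M:ℝ) - 2) * u with hP_def
  set Q : ℝ := 1 + ((M:ℝ) - 1) * u with hQ_def
  have hMu : (M:ℝ) * u ≤ 1/4 := by
    have h : (M:ℝ)*u = u*(4*(M:ℝ))/4 := by ring
    rw [h]; linarith
  have h4u : 4 * u ≤ (M:ℝ) * u := mul_le_mul_of_nonneg_right hMR hu.le
  have hMu0 : 0 ≤ (M:ℝ) * u := mul_nonneg hMpos.le hu.le
  have hPpos : 0 < P := by rw [hP_def]; nlinarith [mul_nonneg (by linarith : (0:ℝ) ≤ (M:ℝ) - 2) hu.le]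
  have hQpos : 0 < Q := by rw [hQ_def]; nlinarith [mul_nonneg (by linarith : (0:ℝ) ≤ (M:ℝ) - 1) hu.le]
  have harg1 : 1 - 4 * (1 - u) * ((M - 1 : ℕ) : ℝ) / ((4 * M : ℕ) : ℝ) = Q / M := by
    rw [hc1, hcast, hQ_def]
    field_simp
    ring
  have harg2 : 1 - 4 * (1 - u) * ((M - 2 : ℕ) : ℝ) / ((4 * M : ℕ) : ℝ) = P / M := by
    rw [hc2, hcast, hP_def]
    field_simp
    ring
  rw [harg1] at h1
  rw [harg2] at h2
  have hdiff : x (M - 1) - x (M - 2)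
      = τ / (p * μ₀) * (Real.log P - Real.log Q) := by
    rw [h1, h2, Real.log_div hQpos.ne' hMpos.ne', Real.log_div hPpos.ne' hMpos.ne']
    ring
  set L : ℝ := Real.log P - Real.log Q with hL_def
  have hPQ1 : 8 * Q ≤ 5 * P := by
    rw [hP_def, hQ_def]; nlinarith [hMu, h4u, hu.le]
  have hPQ2 : 4 * P ≤ 9 * Q := by
    rw [hP_def, hQ_def]; nlinarith [hMu, h4u, hMu0, hu.le]
  have hLlog : L = Real.log (P / Q) := by
    rw [hL_def, Real.log_div hPpos.ne' hQpos.ne']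
  have hratio1 : (8:ℝ)/5 ≤ P / Q := by
    rw [le_div_iff₀ hQpos]; linarith
  have hratio2 : P / Q ≤ 9/4 := by
    rw [div_le_iff₀ hQpos]; linarith
  have hexp14 : Real.exp (1/4) ≤ 8/5 := by
    by_contra h
    push_neg at h
    have h4 : Real.exp (1/4) ^ (4:ℕ) = Real.exp 1 := by
      rw [← Real.exp_nat_mul]; norm_num
    have hlt : ((8:ℝ)/5) ^ (4:ℕ) < Real.exp (1/4) ^ (4:ℕ) :=
      pow_lt_pow_left₀ h (by norm_num) (by norm_num)
    rw [h4] at hlt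
    have := Real.exp_one_lt_d9
    norm_num at hlt
    linarith
  have hL1 : 1/4 ≤ L := by
    rw [hLlog]
    have h1' : Real.exp (1/4) ≤ P / Q := le_trans hexp14 hratio1
    calc (1:ℝ)/4 = Real.log (Real.exp (1/4)) := (Real.log_exp _).symm
      _ ≤ Real.log (P / Q) := Real.log_le_log (Real.exp_pos _) h1'
  have hL2 : L ≤ 1 := by
    rw [hLlog]
    have h2' : P / Q ≤ Real.exp 1 := by
      have := Real.exp_one_gt_d9
      linarith
    calc Real.log (P / Q) ≤ Real.log (Real.exp 1) :=
        Real.log_le_log (by positivity) h2'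
      _ = 1 := Real.log_exp _
  have hCpos : 0 < τ / (p * μ₀) := by positivity
  constructor
  · have heq : τ / (4 * p) * u = τ / (p * μ₀) * (1/4) := by
      rw [hu_def]; simp only [div_eq_mul_inv, mul_inv]; ring
    rw [hdiff, heq]
    exact mul_le_mul_of_nonneg_left hL1 hCpos.le
  · have heq : τ / p * u = τ / (p * μ₀) * 1 := by
      rw [hu_def, mul_one]; simp only [div_eq_mul_inv, mul_inv]; ring
    rw [hdiff, heq]
    exact mul_le_mul_of_nonneg_left hL2 hCpos.le
end

section
/- Under the Bakhvalov-type mesh xᵢ = -(τ/(pμ₀))·ln(1 − ξ·i/N) with ξ = 4(1 − μ₀⁻¹), μ₀⁻¹ ≤ N⁻¹, τ ≥ 1, 0 < p < 1, the last layer mesh size h_{N/4−1} = x_{N/4} − x_{N/4−1} satisfies (τ/(2p))·μ₀⁻¹ ≤ h_{N/4−1} ≤ (4τ/p)·N⁻¹. -/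
theorem stmt_9 (N : ℕ) (hN : 16 ≤ N) (hdvd : 4 ∣ N)
    (μ₀ τ p : ℝ) (hμ₀ : 0 < μ₀) (hμ : μ₀⁻¹ ≤ (N : ℝ)⁻¹) (hτ : 1 ≤ τ)
    (hp : 0 < p) (hp1 : p < 1)
    (x : ℕ → ℝ)
    (hx : ∀ i : ℕ, i ≤ N / 4 →
      x i = -(τ / (p * μ₀)) * Real.log (1 - 4 * (1 - μ₀⁻¹) * (i : ℝ) / (N : ℝ))) :
    τ / (2 * p) * μ₀⁻¹ ≤ x (N / 4) - x (N / 4 - 1) ∧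
    x (N / 4) - x (N / 4 - 1) ≤ 4 * τ / p * (N : ℝ)⁻¹ := by
  obtain ⟨k, hk⟩ := hdvd
  have hk4 : 4 ≤ k := by omega
  have hm : N / 4 = k := by omega
  have hNR : (N : ℝ) = 4 * k := by exact_mod_cast hk
  have hNpos : (0:ℝ) < N := by positivity
  have hN16 : (16:ℝ) ≤ N := by exact_mod_cast hN
  have hμN : (N:ℝ) ≤ μ₀ := by
    have := (inv_le_inv₀ hμ₀ hNpos).mp hμ
    linarith
  have hμ16 : (16:ℝ) ≤ μ₀ := le_trans hN16 hμN
  have hiμpos : 0 < μ₀⁻¹ := by positivity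
  have hx1 := hx (N/4) le_rfl
  have hx2 := hx (N/4-1) (by omega)
  rw [hm] at hx1 hx2 ⊢
  have hcast : ((k - 1 : ℕ) : ℝ) = (k : ℝ) - 1 := by
    push_cast [Nat.cast_sub (by omega : 1 ≤ k)]; ring
  have hkpos : (0:ℝ) < k := by positivity
  have hc1 : 1 - 4*(1-μ₀⁻¹)*((k:ℕ):ℝ)/N = μ₀⁻¹ := by
    rw [hNR]; field_simp; ring
  set t : ℝ := 4*(μ₀-1)/N with ht
  have hc2 : 1 - 4*(1-μ₀⁻¹)*((k-1 : ℕ):ℝ)/N = μ₀⁻¹ * (1 + t) := by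
    rw [hcast, hNR, ht, hNR]; field_simp; ring
  have ht3 : (3:ℝ) ≤ t := by
    rw [ht, le_div_iff₀ hNpos]; linarith
  have hdiff : x k - x (k-1) = τ/(p*μ₀) * Real.log (1+t) := by
    rw [hx1, hx2, hc1, hc2, Real.log_mul (ne_of_gt hiμpos) (by linarith)]; ring
  have hC : 0 < τ/(p*μ₀) := by positivity
  have hlog : (1/2:ℝ) ≤ Real.log (1+t) := by
    rw [Real.le_log_iff_exp_le (by linarith)]
    have h1 := Real.exp_one_lt_d9
    have h2 : Real.exp (1/2) ≤ Real.exp 1 := Real.exp_le_exp.mpr (by norm_num)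
    linarith
  have hlogt : Real.log (1+t) ≤ t := by
    have := Real.log_le_sub_one_of_pos (x := 1+t) (by linarith)
    linarith
  constructor
  · rw [hdiff]
    calc τ/(2*p)*μ₀⁻¹ = τ/(p*μ₀)*(1/2) := by
          field_simp
      _ ≤ τ/(p*μ₀)*Real.log (1+t) := mul_le_mul_of_nonneg_left hlog hC.le
  · rw [hdiff]
    have h1 : τ/(p*μ₀)*Real.log (1+t) ≤ τ/(p*μ₀)*t :=
      mul_le_mul_of_nonneg_left hlogt hC.le
    have h2 : τ/(p*μ₀)*t = 4*τ/p*(N:ℝ)⁻¹ * ((μ₀-1)/μ₀) := by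
      rw [ht]; field_simp
    have h3 : (μ₀-1)/μ₀ ≤ 1 := by
      rw [div_le_one hμ₀]; linarith
    have h4 : 4*τ/p*(N:ℝ)⁻¹ * ((μ₀-1)/μ₀) ≤ 4*τ/p*(N:ℝ)⁻¹ * 1 :=
      mul_le_mul_of_nonneg_left h3 (by positivity)
    linarith [h1, h2 ▸ h1, h4]
end

section
/- Let xᵢ = -(τ/(pμ₀))·ln(1 − ξ·i/N) with ξ = 4(1 − μ₀⁻¹), μ₀⁻¹ ≤ N⁻¹, τ ≥ 1, 0 < p < 1, N ≥ 16. Then for every real m with 0 ≤ m ≤ τ and every i = 0, 1, …, N/4 − 2, hᵢ^m · e^{−pμ₀xᵢ} ≤ C·μ₀^{−m}·N^{−m} for a constant C depending only on τ and p. -/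
set_option maxHeartbeats 1000000

theorem stmt_10 (τ p : ℝ) (hτ : 1 ≤ τ) (hp : 0 < p) (hp1 : p < 1) :
    ∃ C : ℝ, 0 < C ∧
      ∀ (N : ℕ), 16 ≤ N → 4 ∣ N →
      ∀ μ₀ : ℝ, 0 < μ₀ → μ₀⁻¹ ≤ (N : ℝ)⁻¹ →
      ∀ x : ℕ → ℝ,
        (∀ i : ℕ, i ≤ N / 4 →
          x i = -(τ / (p * μ₀)) * Real.log (1 - 4 * (1 - μ₀⁻¹) * (i : ℝ) / (N : ℝ))) →
      ∀ m : ℝ, 0 ≤ m → m ≤ τ →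
      ∀ i : ℕ, i ≤ N / 4 - 2 →
        (x (i + 1) - x i) ^ m * Real.exp (-(p * μ₀) * x i) ≤
          C * μ₀ ^ (-m) * (N : ℝ) ^ (-m) := by
  have hτ0 : (0:ℝ) < τ := lt_of_lt_of_le one_pos hτ
  have hB1 : (1:ℝ) ≤ 8 * τ / p := by
    rw [le_div_iff₀ hp]; nlinarith
  have hB0 : (0:ℝ) < 8 * τ / p := lt_of_lt_of_le one_pos hB1
  refine ⟨(8 * τ / p) ^ τ, Real.rpow_pos_of_pos hB0 τ, ?_⟩
  intro N hN hdvd μ₀ hμ hμN x hx m hm0 hmτ i hi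
  obtain ⟨k, hk⟩ := hdvd
  have hk4 : 4 ≤ k := by omega
  have hN4 : N / 4 = k := by omega
  have hik : i + 2 ≤ k := by omega
  have hNR : (N:ℝ) = 4 * k := by rw [hk]; push_cast; ring
  have hN0 : (0:ℝ) < N := by positivity
  have hN16 : (16:ℝ) ≤ N := by exact_mod_cast hN
  have hNinv : (N:ℝ)⁻¹ ≤ 1/16 := by
    rw [show (1:ℝ)/16 = 16⁻¹ by norm_num]
    exact inv_anti₀ (by norm_num) hN16
  have hu0 : 0 < μ₀⁻¹ := inv_pos.mpr hμ
  have hu : μ₀⁻¹ ≤ 1/16 := hμN.trans hNinv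
  set ξ : ℝ := 4 * (1 - μ₀⁻¹) with hξ
  clear_value ξ
  have hξ0 : 0 < ξ := by rw [hξ]; nlinarith
  have hξ4 : ξ ≤ 4 := by rw [hξ]; nlinarith
  set t0 : ℝ := 1 - ξ * i / N with ht0def
  clear_value t0
  set t1 : ℝ := 1 - ξ * (i + 1) / N with ht1def
  clear_value t1
  have hikR : (i:ℝ) + 2 ≤ k := by exact_mod_cast hik
  have ht1ξ : ξ / N ≤ t1 := by
    rw [ht1def, le_sub_iff_add_le]
    rw [← add_div, div_le_one hN0, hNR]
    nlinarith
  have ht1pos : 0 < t1 := lt_of_lt_of_le (by positivity) ht1ξ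
  have ht01 : t0 = t1 + ξ / N := by rw [ht0def, ht1def]; ring
  have ht0pos : 0 < t0 := by rw [ht01]; positivity
  have ht0le1 : t0 ≤ 1 := by
    have h5 : 0 ≤ ξ * i / N := by positivity
    rw [ht0def]; linarith
  have ht0le2 : t0 ≤ 2 * t1 := by rw [ht01]; linarith
  have ht1let0 : t1 ≤ t0 := by
    have h6 : 0 ≤ ξ / N := by positivity
    rw [ht01]; linarith
  -- x values
  have hxi : x i = -(τ / (p * μ₀)) * Real.log t0 := by
    rw [hx i (by omega), ht0def]
  have hxi1 : x (i+1) = -(τ / (p * μ₀)) * Real.log t1 := by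
    rw [hx (i+1) (by omega), ht1def]; push_cast; ring_nf
  set a : ℝ := τ / (p * μ₀) with ha
  clear_value a
  have ha0 : 0 < a := by rw [ha]; positivity
  set h : ℝ := x (i+1) - x i with hh
  clear_value h
  have hhval : h = a * (Real.log t0 - Real.log t1) := by
    rw [hh, hxi, hxi1]; ring
  have hh0 : 0 ≤ h := by
    rw [hhval]
    have h7 := Real.log_le_log ht1pos ht1let0
    exact mul_nonneg ha0.le (by linarith)
  have hhle : h ≤ a * (ξ / N / t1) := by
    rw [hhval, ← Real.log_div ht0pos.ne' ht1pos.ne']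
    have hld := Real.log_le_sub_one_of_pos (div_pos ht0pos ht1pos)
    have heq : t0 / t1 - 1 = ξ / N / t1 := by
      rw [ht01, add_div, div_self ht1pos.ne']; ring
    exact mul_le_mul_of_nonneg_left (heq ▸ hld) ha0.le
  -- exp value
  have hexp : Real.exp (-(p * μ₀) * x i) = t0 ^ τ := by
    rw [hxi, Real.rpow_def_of_pos ht0pos]
    congr 1
    field_simp [ha]
    rw [ha, show p * μ₀ * (τ / (p * μ₀)) = τ by field_simp]; ring
  rw [hexp]
  -- split t0^τ
  have hsplit : t0 ^ τ = t0 ^ m * t0 ^ (τ - m) := by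
    rw [← Real.rpow_add ht0pos]; ring_nf
  rw [hsplit]
  have hmul : h ^ m * (t0 ^ m * t0 ^ (τ - m)) = (h * t0) ^ m * t0 ^ (τ - m) := by
    rw [Real.mul_rpow hh0 ht0pos.le]; ring
  rw [hmul]
  have hht0 : h * t0 ≤ (8 * τ / p) / (μ₀ * N) := by
    have h1 : h * t0 ≤ (a * (ξ / N / t1)) * (2 * t1) :=
      mul_le_mul hhle ht0le2 ht0pos.le (by positivity)
    have h2 : (a * (ξ / N / t1)) * (2 * t1) = 2 * a * ξ / N := by
      field_simp
    have h3 : 2 * a * ξ / N ≤ (8 * τ / p) / (μ₀ * N) := by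
      rw [ha, div_le_div_iff₀ hN0 (by positivity)]
      have e1 : 2 * (τ / (p * μ₀)) * ξ * (μ₀ * N) = (2 * τ * ξ * N) / p := by
        field_simp
      have e2 : 8 * τ / p * N = (8 * τ * N) / p := by ring
      rw [e1, e2, div_le_div_iff₀ hp hp]
      nlinarith [mul_nonneg (mul_nonneg (mul_nonneg (by norm_num : (0:ℝ) ≤ 2) hτ0.le)
        (mul_pos hN0 hp).le) (by linarith : (0:ℝ) ≤ 4 - ξ)]
    linarith [h1, h2 ▸ h1]
  have hstep1 : (h * t0) ^ m ≤ ((8 * τ / p) / (μ₀ * N)) ^ m :=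
    Real.rpow_le_rpow (by positivity) hht0 hm0
  have hstep2 : t0 ^ (τ - m) ≤ 1 :=
    Real.rpow_le_one ht0pos.le ht0le1 (by linarith)
  have hrw : ((8 * τ / p) / (μ₀ * N)) ^ m = (8 * τ / p) ^ m * μ₀ ^ (-m) * (N:ℝ) ^ (-m) := by
    rw [div_eq_mul_inv, mul_inv, Real.mul_rpow hB0.le (by positivity),
      Real.mul_rpow (by positivity) (by positivity), Real.inv_rpow hμ.le,
      Real.inv_rpow hN0.le, Real.rpow_neg hμ.le, Real.rpow_neg hN0.le, mul_assoc]
  have hstep3 : (8 * τ / p) ^ m ≤ (8 * τ / p) ^ τ :=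
    Real.rpow_le_rpow_of_exponent_le hB1 hmτ
  calc (h * t0) ^ m * t0 ^ (τ - m)
      ≤ ((8 * τ / p) / (μ₀ * N)) ^ m * 1 := by
        apply mul_le_mul hstep1 hstep2 (Real.rpow_nonneg ht0pos.le _) (by positivity)
    _ = (8 * τ / p) ^ m * μ₀ ^ (-m) * (N:ℝ) ^ (-m) := by rw [hrw]; ring
    _ ≤ (8 * τ / p) ^ τ * μ₀ ^ (-m) * (N:ℝ) ^ (-m) := by
        apply mul_le_mul_of_nonneg_right
        apply mul_le_mul_of_nonneg_right hstep3 (Real.rpow_nonneg hμ.le _)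
        exact Real.rpow_nonneg hN0.le _
end

section
/- Let Tᵢ = (h_{i+1} − hᵢ)·e^{−pμ₀x_{i+1}} for i = 0, 1, …, N/4 − 3, where xᵢ = -(τ/(pμ₀))·ln(1 − ξi/N), ξ = 4(1 − μ₀⁻¹), hᵢ = x_{i+1} − xᵢ, τ ≥ 5/2, 0 < p < 1, μ₀⁻¹ ≤ N⁻¹ and N ≥ 16. Then max over i of Tᵢ ≤ C·μ₀⁻¹·N⁻² for a constant C depending only on τ and p. -/
set_option maxHeartbeats 1000000 in
theorem stmt_11 (τ p : ℝ) (hτ : τ ≥ 5/2) (hp : 0 < p) (hp1 : p < 1) :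
    ∃ C : ℝ, 0 < C ∧
      ∀ (N : ℕ), 16 ≤ N → 4 ∣ N →
      ∀ μ₀ : ℝ, 0 < μ₀ → μ₀⁻¹ ≤ (N : ℝ)⁻¹ →
      ∀ x : ℕ → ℝ,
        (∀ i : ℕ, i ≤ N / 4 →
          x i = -(τ / (p * μ₀)) * Real.log (1 - 4 * (1 - μ₀⁻¹) * (i : ℝ) / (N : ℝ))) →
      ∀ i : ℕ, i ≤ N / 4 - 3 →
        ((x (i + 2) - x (i + 1)) - (x (i + 1) - x i)) * Real.exp (-(p * μ₀) * x (i + 1)) ≤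
          C * μ₀⁻¹ * ((N : ℝ) ^ 2)⁻¹ := by
  refine ⟨32 * τ / p, by positivity, ?_⟩
  intro N hN hdvd μ₀ hμ hμN x hx i hi
  obtain ⟨k, rfl⟩ := hdvd
  have hk : 4 ≤ k := by omega
  have hN4 : (4 * k) / 4 = k := by omega
  rw [hN4] at hx hi
  set n : ℝ := ((4 * k : ℕ) : ℝ) with hn
  have hn' : n = 4 * (k : ℝ) := by push_cast [hn]; ring
  have hn16 : (16 : ℝ) ≤ n := by rw [hn]; exact_mod_cast hN
  clear_value n
  have hnpos : (0 : ℝ) < n := by linarith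
  have hm : (0 : ℝ) < μ₀⁻¹ := by positivity
  have hm16 : μ₀⁻¹ ≤ 1 / 16 := by
    refine le_trans hμN ?_
    rw [inv_eq_one_div]
    exact one_div_le_one_div_of_le (by norm_num) hn16
  set ξ : ℝ := 4 * (1 - μ₀⁻¹) with hξ
  have hξ1 : 15 / 4 ≤ ξ := by rw [hξ]; linarith
  have hξ2 : ξ ≤ 4 := by rw [hξ]; linarith
  clear_value ξ
  have hi3 : (i : ℝ) + 3 ≤ (k : ℝ) := by exact_mod_cast (by omega : i + 3 ≤ k)
  have hipos : (0 : ℝ) ≤ (i : ℝ) := Nat.cast_nonneg i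
  set u : ℝ := 1 - ξ * ((i : ℝ) + 1) / n with hu
  set d : ℝ := ξ / n with hd
  clear_value u d
  have hdpos : 0 < d := by rw [hd]; positivity
  have hd4 : d ≤ 4 / n := by
    rw [hd]; exact div_le_div_of_nonneg_right hξ2 hnpos.le
  have hd154 : 15 / 4 / n ≤ d := by
    rw [hd]; exact div_le_div_of_nonneg_right hξ1 hnpos.le
  -- u - d = 1 - ξ(i+2)/n ≥ 4/n
  have humd : u - d = 1 - ξ * ((i : ℝ) + 2) / n := by
    rw [hu, hd]; field_simp; ring
  have hud4 : 4 / n ≤ u - d := by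
    rw [humd, le_sub_iff_add_le]
    have e1 : ξ * ((i : ℝ) + 2) ≤ 4 * ((i : ℝ) + 2) :=
      mul_le_mul_of_nonneg_right hξ2 (by positivity)
    have e2 : (i : ℝ) + 2 ≤ n / 4 - 1 := by rw [hn']; linarith
    have h1 : ξ * ((i : ℝ) + 2) ≤ n - 4 := by linarith
    rw [← add_div]
    calc (4 + ξ * ((i : ℝ) + 2)) / n ≤ (4 + (n - 4)) / n := by
          apply div_le_div_of_nonneg_right (by linarith) hnpos.le
      _ = 1 := by field_simp; ring
  have hudpos : 0 < u - d := lt_of_lt_of_le (by positivity) hud4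
  have hupos : 0 < u := by linarith
  have hu1 : u ≤ 1 := by
    rw [hu]
    have : 0 ≤ ξ * ((i : ℝ) + 1) / n := by positivity
    linarith
  have hupd : 0 < u + d := by linarith
  -- rewrite the x values
  have hx0 : x i = -(τ / (p * μ₀)) * Real.log (u + d) := by
    rw [hx i (by omega)]
    congr 2
    rw [hu, hd]; push_cast; field_simp; ring
  have hx1 : x (i + 1) = -(τ / (p * μ₀)) * Real.log u := by
    rw [hx (i + 1) (by omega)]
    congr 2
    rw [hu]; push_cast; ring
  have hx2 : x (i + 2) = -(τ / (p * μ₀)) * Real.log (u - d) := by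
    rw [hx (i + 2) (by omega)]
    congr 2
    rw [humd]; push_cast; ring
  set a : ℝ := τ / (p * μ₀) with ha
  have hapos : 0 < a := by rw [ha]; positivity
  -- exponential factor equals u ^ τ (rpow)
  have hexp : Real.exp (-(p * μ₀) * x (i + 1)) = u ^ τ := by
    rw [hx1, ha, Real.rpow_def_of_pos hupos]
    congr 1
    field_simp
  clear_value a
  -- second difference equals a * log (u^2 / ((u+d)*(u-d)))
  set R : ℝ := u ^ 2 / ((u + d) * (u - d)) with hR
  have hRpos : 0 < R := by rw [hR]; positivity
  have hdiff : (x (i + 2) - x (i + 1)) - (x (i + 1) - x i) = a * Real.log R := by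
    rw [hx0, hx1, hx2, hR, Real.log_div (by positivity) (by positivity),
      Real.log_mul (ne_of_gt hupd) (ne_of_gt hudpos), Real.log_pow]
    push_cast
    ring
  have hR1 : 1 ≤ R := by
    have h : (u + d) * (u - d) ≤ u ^ 2 := by
      have e : (u + d) * (u - d) = u ^ 2 - d ^ 2 := by ring
      have hsq := sq_nonneg d
      linarith
    rw [hR]
    exact (one_le_div (by positivity)).mpr h
  have hRm1 : R - 1 = d ^ 2 / ((u + d) * (u - d)) := by
    rw [hR, div_sub_one (by positivity)]
    congr 1
    ring
  clear_value R
  rw [hdiff, hexp]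
  -- bounds
  have hlogR : Real.log R ≤ R - 1 := Real.log_le_sub_one_of_pos hRpos
  have hlognn : 0 ≤ Real.log R := Real.log_nonneg hR1
  have hutau : u ^ τ ≤ u ^ (2 : ℝ) :=
    Real.rpow_le_rpow_of_exponent_ge hupos hu1 (by linarith)
  have hu2 : u ^ (2 : ℝ) = u ^ 2 := by
    rw [show (2 : ℝ) = ((2 : ℕ) : ℝ) by norm_num, Real.rpow_natCast]
  have hutau' : u ^ τ ≤ u ^ 2 := by rw [← hu2]; exact hutau
  have hutaupos : 0 < u ^ τ := Real.rpow_pos_of_pos hupos τ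
  -- d^2 ≤ 16 v  where v = (n^2)⁻¹
  obtain ⟨v, hv⟩ : ∃ v : ℝ, v = (n ^ 2)⁻¹ := ⟨_, rfl⟩
  have hvpos : 0 < v := by rw [hv]; positivity
  have hd2 : d ^ 2 ≤ 16 * v := by
    have h1 : d ^ 2 ≤ (4 / n) ^ 2 := pow_le_pow_left₀ hdpos.le hd4 2
    have h2 : (4 / n) ^ 2 = 16 * v := by rw [hv, div_pow, div_eq_mul_inv]; norm_num
    linarith
  -- key: 2 d^2 ≤ u^2
  have h2d : 2 * d ^ 2 ≤ u ^ 2 := by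
    have hub : d + 4 / n ≤ u := by linarith
    have h1 : 31 / 4 / n ≤ u := by
      have e1 : 15 / 4 / n + 4 / n ≤ d + 4 / n := by linarith
      have e2 : 15 / 4 / n + 4 / n = 31 / 4 / n := by ring
      linarith
    have h3 : (31 / 4 / n) ^ 2 ≤ u ^ 2 := pow_le_pow_left₀ (by positivity) h1 2
    have h4 : (31 / 4 / n) ^ 2 = 961 / 16 * v := by
      rw [hv, div_pow, div_pow, div_eq_mul_inv]; norm_num
    rw [h4] at h3
    linarith
  -- combine
  have step1 : a * Real.log R * u ^ τ ≤ a * (R - 1) * u ^ 2 := by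
    have h1 : a * Real.log R * u ^ τ ≤ a * Real.log R * u ^ 2 :=
      mul_le_mul_of_nonneg_left hutau' (by positivity)
    have h2 : a * Real.log R * u ^ 2 ≤ a * (R - 1) * u ^ 2 :=
      mul_le_mul_of_nonneg_right (mul_le_mul_of_nonneg_left hlogR hapos.le) (sq_nonneg u)
    exact h1.trans h2
  have step2 : a * (R - 1) * u ^ 2 ≤ 2 * a * d ^ 2 := by
    rw [hRm1]
    have hprodpos : 0 < (u + d) * (u - d) := mul_pos hupd hudpos
    have hrw : a * (d ^ 2 / ((u + d) * (u - d))) * u ^ 2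
        = a * (d ^ 2 * u ^ 2) / ((u + d) * (u - d)) := by ring
    rw [hrw, div_le_iff₀ hprodpos]
    have hexpand : (u + d) * (u - d) = u ^ 2 - d ^ 2 := by ring
    have h3 : u ^ 2 ≤ 2 * ((u + d) * (u - d)) := by rw [hexpand]; linarith
    calc a * (d ^ 2 * u ^ 2)
        ≤ a * (d ^ 2 * (2 * ((u + d) * (u - d)))) := by
          apply mul_le_mul_of_nonneg_left _ hapos.le
          exact mul_le_mul_of_nonneg_left h3 (sq_nonneg d)
      _ = 2 * a * d ^ 2 * ((u + d) * (u - d)) := by ring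
  have step3 : 2 * a * d ^ 2 ≤ 32 * a / n ^ 2 := by
    have hrhs : 32 * a / n ^ 2 = 32 * a * v := by rw [hv, div_eq_mul_inv]
    rw [hrhs]
    have h := mul_le_mul_of_nonneg_left hd2 (by positivity : (0:ℝ) ≤ 2 * a)
    have e : 2 * a * (16 * v) = 32 * a * v := by ring
    exact h.trans_eq e
  have hfinal : 32 * a / n ^ 2 = 32 * τ / p * μ₀⁻¹ * (n ^ 2)⁻¹ := by
    rw [ha]
    field_simp
  calc a * Real.log R * u ^ τ ≤ 2 * a * d ^ 2 := step1.trans step2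
    _ ≤ 32 * a / n ^ 2 := step3
    _ = 32 * τ / p * μ₀⁻¹ * (n ^ 2)⁻¹ := hfinal
end

section
/- With the notation of the Bakhvalov-type mesh and τ ≥ 5/2, μ₀⁻¹ ≤ N⁻¹, N ≥ 16, we have T_{N/4−3} = (h_{N/4−2} − h_{N/4−3})e^{−pμ₀x_{N/4−2}} ≤ C·μ₀⁻¹·N^{−τ} ≤ C·μ₀⁻¹·N^{−5/2}. -/
set_option maxHeartbeats 1600000 in
theorem stmt_13 (τ p : ℝ) (hτ : τ ≥ 5/2) (hp : 0 < p) (hp1 : p < 1) :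
    ∃ C : ℝ, 0 < C ∧
      ∀ (N : ℕ), 16 ≤ N → 4 ∣ N →
      ∀ μ₀ : ℝ, 0 < μ₀ → μ₀⁻¹ ≤ (N : ℝ)⁻¹ →
      ∀ x : ℕ → ℝ,
        (∀ i : ℕ, i ≤ N / 4 →
          x i = -(τ / (p * μ₀)) * Real.log (1 - 4 * (1 - μ₀⁻¹) * (i : ℝ) / (N : ℝ))) →
        ((x (N / 4 - 1) - x (N / 4 - 2)) - (x (N / 4 - 2) - x (N / 4 - 3))) *
            Real.exp (-(p * μ₀) * x (N / 4 - 2)) ≤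
          C * μ₀⁻¹ * (N : ℝ) ^ (-τ) ∧
        C * μ₀⁻¹ * (N : ℝ) ^ (-τ) ≤ C * μ₀⁻¹ * (N : ℝ) ^ (-(5/2 : ℝ)) := by
  have hτ0 : (0:ℝ) < τ := by linarith
  have hlog43 : (0:ℝ) < Real.log (4/3) := Real.log_pos (by norm_num)
  refine ⟨(τ/p) * Real.log (4/3) * (9:ℝ) ^ τ, ?_, ?_⟩
  · have h9 : (0:ℝ) < (9:ℝ) ^ τ := Real.rpow_pos_of_pos (by norm_num) τ
    have := div_pos hτ0 hp
    positivity
  intro N hN hdvd μ₀ hμ hμN x hx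
  obtain ⟨m, rfl⟩ := hdvd
  have hm : 4 ≤ m := by omega
  have hmR : (4:ℝ) ≤ (m:ℝ) := by exact_mod_cast hm
  have hNR : ((4*m:ℕ):ℝ) = 4*(m:ℝ) := by push_cast; ring
  have hm0 : (0:ℝ) < (m:ℝ) := by linarith
  set b := μ₀⁻¹ with hbdef
  have hb : 0 < b := inv_pos.mpr hμ
  have hbN : b ≤ (4*(m:ℝ))⁻¹ := by rwa [hNR] at hμN
  have hb16 : b ≤ 1/16 := le_trans hbN (by rw [inv_le_comm₀ (by linarith) (by norm_num)]; linarith)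
  set δ : ℝ := (1 - b)/(m:ℝ) with hδdef
  have hδ : 0 < δ := div_pos (by linarith) hm0
  have key : ∀ j : ℕ, 1 ≤ j → j ≤ 3 →
      (1 : ℝ) - 4*(1-b)*((4*m/4 - j : ℕ):ℝ)/((4*m:ℕ):ℝ) = b + j*δ := by
    intro j hj1 hj3
    have hjm : (4*m/4 - j : ℕ) = m - j := by omega
    have hjle : j ≤ m := by omega
    have hc : ((m - j : ℕ):ℝ) = (m:ℝ) - j := by push_cast [hjle]; ring
    rw [hjm, hc, hNR, hδdef]
    have hm0' : (m:ℝ) ≠ 0 := ne_of_gt hm0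
    field_simp
    ring
  have e1 := hx (4*m/4 - 1) (by omega)
  have e2 := hx (4*m/4 - 2) (by omega)
  have e3 := hx (4*m/4 - 3) (by omega)
  rw [key 1 (by norm_num) (by norm_num)] at e1
  rw [key 2 (by norm_num) (by norm_num)] at e2
  rw [key 3 (by norm_num) (by norm_num)] at e3
  simp only [Nat.cast_ofNat, Nat.cast_one] at e1 e2 e3
  set u1 : ℝ := b + 1*δ
  set u2 : ℝ := b + 2*δ
  set u3 : ℝ := b + 3*δ
  have hu1 : 0 < u1 := by simp only [u1]; nlinarith
  have hu2 : 0 < u2 := by simp only [u2]; nlinarith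
  have hu3 : 0 < u3 := by simp only [u3]; nlinarith
  have hpμ : p * μ₀ ≠ 0 := by positivity
  have hexp : Real.exp (-(p * μ₀) * x (4*m/4 - 2)) = u2 ^ τ := by
    rw [e2, Real.rpow_def_of_pos hu2]
    congr 1
    field_simp
  have hA : (0:ℝ) < τ/(p*μ₀) := by positivity
  have hsq : u2^2 ≤ (4/3) * (u1*u3) := by simp only [u1, u2, u3]; nlinarith [mul_pos hb hδ, sq_nonneg b]
  have hlog : 2 * Real.log u2 - Real.log u1 - Real.log u3 ≤ Real.log (4/3) := by
    have h1 : Real.log (u2^2) ≤ Real.log ((4/3)*(u1*u3)) :=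
      Real.log_le_log (by positivity) hsq
    rw [Real.log_pow, Real.log_mul (by norm_num) (by positivity),
      Real.log_mul (ne_of_gt hu1) (ne_of_gt hu3)] at h1
    push_cast at h1
    linarith
  have hu2τ : (0:ℝ) < u2 ^ τ := Real.rpow_pos_of_pos hu2 τ
  have hLHS : ((x (4*m/4 - 1) - x (4*m/4 - 2)) - (x (4*m/4 - 2) - x (4*m/4 - 3))) *
      Real.exp (-(p * μ₀) * x (4*m/4 - 2)) =
      (τ/(p*μ₀)) * (2 * Real.log u2 - Real.log u1 - Real.log u3) * u2 ^ τ := by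
    rw [hexp, e1, e2, e3]; ring
  have hu2le : u2 ≤ 9 / (4*(m:ℝ)) := by
    have h1 : b ≤ 1/(4*(m:ℝ)) := by rwa [one_div]
    have h2 : 2*δ ≤ 8/(4*(m:ℝ)) := by
      rw [hδdef, mul_div_assoc', div_le_div_iff₀ hm0 (by linarith)]
      nlinarith
    simp only [u2]
    have : 9 / (4*(m:ℝ)) = 1/(4*(m:ℝ)) + 8/(4*(m:ℝ)) := by ring
    linarith
  have hrpow : u2 ^ τ ≤ (9:ℝ) ^ τ * ((4*m:ℕ):ℝ) ^ (-τ) := by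
    have h1 : u2 ^ τ ≤ (9/(4*(m:ℝ))) ^ τ :=
      Real.rpow_le_rpow (le_of_lt hu2) hu2le (le_of_lt hτ0)
    have h2 : (9/(4*(m:ℝ))) ^ τ = (9:ℝ) ^ τ * (4*(m:ℝ)) ^ (-τ) := by
      rw [Real.div_rpow (by norm_num) (by linarith), Real.rpow_neg (by linarith), div_eq_mul_inv]
    rw [hNR, ← h2]
    exact h1
  constructor
  · rw [hLHS]
    calc (τ/(p*μ₀)) * (2 * Real.log u2 - Real.log u1 - Real.log u3) * u2 ^ τ
        ≤ (τ/(p*μ₀)) * Real.log (4/3) * u2 ^ τ := by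
          apply mul_le_mul_of_nonneg_right _ (le_of_lt hu2τ)
          exact mul_le_mul_of_nonneg_left hlog (le_of_lt hA)
      _ ≤ (τ/(p*μ₀)) * Real.log (4/3) * ((9:ℝ) ^ τ * ((4*m:ℕ):ℝ) ^ (-τ)) := by
          apply mul_le_mul_of_nonneg_left hrpow
          positivity
      _ = (τ/p) * Real.log (4/3) * (9:ℝ) ^ τ * b * ((4*m:ℕ):ℝ) ^ (-τ) := by
          rw [hbdef]; field_simp
  · apply mul_le_mul_of_nonneg_left _ (by positivity)
    apply Real.rpow_le_rpow_of_exponent_le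
    · rw [hNR]; linarith
    · linarith
end
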